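/- Let G=(V,E) be a complete directed acyclic graph on V=[p] containing all self-loops, i.e., a DAG in which for every pair of distinct nodes i,j exactly one of the edges (i,j), (j,i) belongs to E. Then for every symmetric positive definite p×p matrix C, the graphical continuous Lyapunov model satisfies M_{G,C} = PD_p, the set of all symmetric positive definite p×p matrices. -/

import Mathlib

open Matrix MeasureTheory

/-- A real square matrix is *stable* if every eigenvalue (over `ℂ`) has strictly
negative real part. -/
def IsStableMat {n : Type*} [Fintype n] [DecidableEq n] (M : Matrix n n ℝ) : Prop :=
  ∀ μ ∈ spectrum ℂ (M.map (algebraMap ℝ ℂ)), μ.re < 0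

/-- `M ∈ ℝ^E`: the matrix `M` is supported on the directed graph with edge set `E`,
i.e. `M j i = 0` whenever `(i, j) ∉ E`. -/
def InSupp {n : Type*} (E : Set (n × n)) (M : Matrix n n ℝ) : Prop :=
  ∀ i j : n, (i, j) ∉ E → M j i = 0

/-- The graphical continuous Lyapunov model `M_{G,C}`: positive definite matrices `S`
such that `M * S + S * Mᵀ + C = 0` for some `M ∈ ℝ^E`. -/
def LyapModel {n : Type*} [Fintype n] [DecidableEq n] (E : Set (n × n))
    (C : Matrix n n ℝ) : Set (Matrix n n ℝ) :=
  {S | S.PosDef ∧ ∃ M : Matrix n n ℝ, InSupp E M ∧ M * S + S * Mᵀ + C = 0}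

/-- Global identifiability: no two stable matrices supported on `E` yield the same
solution of the Lyapunov equation.  (Since for stable `M` the Lyapunov equation has a
unique positive definite solution `Σ(M,C)`, this is equivalent to every fiber
`F_{G,C}(M₀)` being the singleton `{M₀}`.) -/
def GloballyIdentifiable {n : Type*} [Fintype n] [DecidableEq n] (E : Set (n × n))
    (C : Matrix n n ℝ) : Prop :=
  ∀ M₁ M₂ : Matrix n n ℝ,
    InSupp E M₁ → IsStableMat M₁ → InSupp E M₂ → IsStableMat M₂ →
    ∀ S : Matrix n n ℝ, S.PosDef →
      M₁ * S + S * M₁ᵀ + C = 0 → M₂ * S + S * M₂ᵀ + C = 0 → M₁ = M₂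

/-- A directed graph is *simple* if it has no 2-cycles between distinct nodes. -/
def IsSimpleDigraph {n : Type*} (E : Set (n × n)) : Prop :=
  ∀ i j : n, i ≠ j → (i, j) ∈ E → (j, i) ∉ E

/-- The fiber `F_{G,C}(M₀)`: all stable matrices supported on `E` whose Lyapunov
solution coincides with that of `M₀`, i.e. some positive definite `S` solves the
Lyapunov equation for both `M₀` and `M`. -/
def Fiber {n : Type*} [Fintype n] [DecidableEq n] (E : Set (n × n))
    (C M₀ : Matrix n n ℝ) : Set (Matrix n n ℝ) :=
  {M | InSupp E M ∧ IsStableMat M ∧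
    ∃ S : Matrix n n ℝ, S.PosDef ∧ M₀ * S + S * M₀ᵀ + C = 0 ∧ M * S + S * Mᵀ + C = 0}

/-- The identification of the coordinate space `ℝ^{|E|}` with the matrices in `ℝ^E`:
the coordinate attached to an edge `(i,j)` is the entry `M j i`. -/
def edgeMatrix {p : ℕ} (E : Finset (Fin p × Fin p)) (f : E → ℝ) :
    Matrix (Fin p) (Fin p) ℝ :=
  fun j i => if h : (i, j) ∈ E then f ⟨(i, j), h⟩ else 0

/-- Generic identifiability: the set of parameter vectors `f ∈ ℝ^{|E|}` whose matrix
is stable but whose fiber is not a singleton is a Lebesgue null set. -/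
def GenericallyIdentifiable {p : ℕ} (E : Finset (Fin p × Fin p))
    (C : Matrix (Fin p) (Fin p) ℝ) : Prop :=
  volume {f : E → ℝ | IsStableMat (edgeMatrix E f) ∧
    Fiber (E : Set (Fin p × Fin p)) C (edgeMatrix E f) ≠ {edgeMatrix E f}} = 0


section LyapAux

open Matrix

/-- Algebraic core: if `A + Aᵀ = -(B * C * Bᵀ)` then `M := B⁻¹ * (A * Dm⁻¹) * B`
solves the Lyapunov equation for `S := B⁻¹ * Dm * (Bᵀ)⁻¹`. -/
theorem lyap_alg_aux {n : Type*} [Fintype n] [DecidableEq n]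
    (B Dm A C : Matrix n n ℝ) [Invertible B] [Invertible Dm]
    (hDt : Dmᵀ = Dm) (hA : A + Aᵀ = -(B * C * Bᵀ)) :
    (B⁻¹ * (A * Dm⁻¹) * B) * (B⁻¹ * Dm * (Bᵀ)⁻¹)
      + (B⁻¹ * Dm * (Bᵀ)⁻¹) * (B⁻¹ * (A * Dm⁻¹) * B)ᵀ + C = 0 := by
  have h1 : (B⁻¹ * (A * Dm⁻¹) * B) * (B⁻¹ * Dm * (Bᵀ)⁻¹) = B⁻¹ * (A * (Bᵀ)⁻¹) := by
    simp [Matrix.mul_assoc, Matrix.mul_inv_cancel_left_of_invertible,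
      Matrix.inv_mul_cancel_left_of_invertible]
  have h2 : (B⁻¹ * (A * Dm⁻¹) * B)ᵀ = Bᵀ * (Dm⁻¹ * (Aᵀ * (Bᵀ)⁻¹)) := by
    simp [Matrix.transpose_mul, Matrix.transpose_nonsing_inv, hDt, Matrix.mul_assoc]
  have h3 : (B⁻¹ * Dm * (Bᵀ)⁻¹) * (B⁻¹ * (A * Dm⁻¹) * B)ᵀ = B⁻¹ * (Aᵀ * (Bᵀ)⁻¹) := by
    rw [h2]
    simp [Matrix.mul_assoc, Matrix.mul_inv_cancel_left_of_invertible,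
      Matrix.inv_mul_cancel_left_of_invertible]
  rw [h1, h3]
  have h4 : B⁻¹ * (A * (Bᵀ)⁻¹) + B⁻¹ * (Aᵀ * (Bᵀ)⁻¹) = B⁻¹ * ((A + Aᵀ) * (Bᵀ)⁻¹) := by
    rw [Matrix.add_mul, Matrix.mul_add]
  have h6 : (B * C * Bᵀ) * (Bᵀ)⁻¹ = B * C := by
    rw [Matrix.mul_assoc (B * C), Matrix.mul_inv_of_invertible, Matrix.mul_one]
  have h5 : B⁻¹ * (-(B * C * Bᵀ) * (Bᵀ)⁻¹) = -C := by
    rw [Matrix.neg_mul, h6, Matrix.mul_neg, Matrix.inv_mul_cancel_left_of_invertible]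
  rw [h4, hA, h5]
  abel

/-- For any positive definite `S` and symmetric `C` over a finite linearly ordered
index type, there is a lower triangular `M` with `M * S + S * Mᵀ + C = 0`. -/
theorem exists_lowerTri_lyap {n : Type*} [Fintype n] [LinearOrder n]
    {S : Matrix n n ℝ} (hS : S.PosDef) (C : Matrix n n ℝ) (hCsym : Cᵀ = C) :
    ∃ M : Matrix n n ℝ, (∀ i j : n, i < j → M i j = 0) ∧ M * S + S * Mᵀ + C = 0 := by
  letI : DecidableRel ((· ≤ ·) : n → n → Prop) := LinearOrder.toDecidableLE
  letI : WellFoundedLT n := Finite.to_wellFoundedLT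
  letI : LocallyFiniteOrderBot n :=
    LocallyFiniteOrderBot.ofIic' n (fun a => Finset.univ.filter (· ≤ a))
      (by intro a x; simp)
  have hct : ∀ X : Matrix n n ℝ, Xᴴ = Xᵀ := fun X =>
    Matrix.conjTranspose_eq_transpose_of_trivial X
  set B : Matrix n n ℝ := LDL.lowerInv hS with hBdef
  haveI : Invertible B := LDL.invertibleLowerInv hS
  have hD : LDL.diag hS = B * S * Bᵀ := by
    rw [← hct B]; exact LDL.diag_eq_lowerInv_conj hS
  haveI : Invertible S := hS.isUnit.invertible
  haveI : Invertible Bᵀ := Matrix.invertibleTranspose B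
  haveI : Invertible (B * S) := invertibleMul _ _
  haveI hDinvble : Invertible (LDL.diag hS) := by
    rw [hD]; exact invertibleMul _ _
  set Dm : Matrix n n ℝ := LDL.diag hS with hDmdef
  have hDt : Dmᵀ = Dm := by
    rw [hDmdef]; unfold LDL.diag; exact Matrix.diagonal_transpose _
  -- the target symmetric matrix
  set C' : Matrix n n ℝ := B * C * Bᵀ with hC'def
  have hC'sym : C'ᵀ = C' := by
    rw [hC'def, Matrix.transpose_mul, Matrix.transpose_mul, Matrix.transpose_transpose,
      hCsym, Matrix.mul_assoc]
  -- the lower triangular half of `-C'`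
  set A : Matrix n n ℝ :=
    Matrix.of (fun i j => if j < i then -C' i j else if i = j then -C' i i / 2 else 0)
    with hAdef
  have hA : A + Aᵀ = -C' := by
    ext i j
    have hsym : C' j i = C' i j := (congrFun (congrFun hC'sym j) i).symm
    rcases lt_trichotomy i j with h | h | h
    · simp [hAdef, h, h.ne, h.ne', not_lt_of_gt h, hsym]
    · subst h
      simp [hAdef, lt_irrefl]
    · simp [hAdef, h, h.ne, h.ne', not_lt_of_gt h]
  -- the solution matrix
  refine ⟨B⁻¹ * (A * Dm⁻¹) * B, ?_, ?_⟩
  · -- triangularity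
    have hBt : B.BlockTriangular (OrderDual.toDual : n → nᵒᵈ) := fun i j h =>
      LDL.lowerInv_triangular hS (by exact h)
    have hBit : (B⁻¹).BlockTriangular (OrderDual.toDual : n → nᵒᵈ) :=
      Matrix.blockTriangular_inv_of_blockTriangular hBt
    have hAt : A.BlockTriangular (OrderDual.toDual : n → nᵒᵈ) := by
      intro i j h
      have h' : i < j := h
      simp [hAdef, not_lt_of_gt h', h'.ne]
    have hDmt : Dm.BlockTriangular (OrderDual.toDual : n → nᵒᵈ) := by
      rw [hDmdef]; unfold LDL.diag; exact Matrix.blockTriangular_diagonal _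
    have hDit : (Dm⁻¹).BlockTriangular (OrderDual.toDual : n → nᵒᵈ) :=
      Matrix.blockTriangular_inv_of_blockTriangular hDmt
    have := (hBit.mul (hAt.mul hDit)).mul hBt
    intro i j hij
    exact this (by exact hij)
  · -- the Lyapunov equation
    have hS' : B⁻¹ * Dm * (Bᵀ)⁻¹ = S := by
      simp [hD, Matrix.mul_assoc, Matrix.mul_inv_of_invertible,
        Matrix.inv_mul_cancel_left_of_invertible]
    have := lyap_alg_aux B Dm A C hDt (by rw [hA, hC'def])
    rwa [hS'] at this

end LyapAux

/-- for a complete DAG (with all self-loops, and for every pair of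
distinct nodes exactly one of the two possible edges), the model equals the whole
positive definite cone. -/
theorem complete_dag_model_eq_posdef {p : ℕ}
    (E : Set (Fin p × Fin p)) (hloops : ∀ i : Fin p, (i, i) ∈ E)
    (hacyc : ∀ i : Fin p,
      ¬ Relation.TransGen (fun a b : Fin p => (a, b) ∈ E ∧ a ≠ b) i i)
    (hcomp : ∀ i j : Fin p, i ≠ j → Xor' ((i, j) ∈ E) ((j, i) ∈ E))
    (C : Matrix (Fin p) (Fin p) ℝ) (hC : C.PosDef) :
    LyapModel E C = {S : Matrix (Fin p) (Fin p) ℝ | S.PosDef} := by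
  classical
  ext S
  constructor
  · exact fun h => h.1
  · intro hSpd
    -- transitivity of the edge relation
    have htrans : ∀ i j k : Fin p, i ≠ j → (i, j) ∈ E → j ≠ k → (j, k) ∈ E →
        i ≠ k ∧ (i, k) ∈ E := by
      intro i j k hij hEij hjk hEjk
      have hik : i ≠ k := by
        rintro rfl
        exact hacyc i (Relation.TransGen.head ⟨hEij, hij⟩
          (Relation.TransGen.single ⟨hEjk, hjk⟩))
      refine ⟨hik, ?_⟩
      rcases hcomp i k hik with ⟨h, _⟩ | ⟨h, _⟩
      · exact h
      · exact absurd (Relation.TransGen.head ⟨hEij, hij⟩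
          (Relation.TransGen.head ⟨hEjk, hjk⟩
            (Relation.TransGen.single ⟨h, hik.symm⟩))) (hacyc i)
    have hnotboth : ∀ i j : Fin p, i ≠ j → (i, j) ∈ E → (j, i) ∈ E → False := by
      intro i j hij h1 h2
      exact hacyc i (Relation.TransGen.head ⟨h1, hij⟩
        (Relation.TransGen.single ⟨h2, hij.symm⟩))
    let r : Fin p → Fin p → Prop := fun a b => a ≠ b ∧ (a, b) ∈ E
    haveI : IsTrans (Fin p) r := ⟨fun a b c hab hbc =>
      let h := htrans a b c hab.1 hab.2 hbc.1 hbc.2; ⟨h.1, h.2⟩⟩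
    haveI : IsIrrefl (Fin p) r := ⟨fun a h => h.1 rfl⟩
    haveI : IsTrichotomous (Fin p) r := ⟨fun a b hab hba => (show r a b ∨ a = b ∨ r b a by
      by_cases h : a = b
      · exact Or.inr (Or.inl h)
      · rcases hcomp a b h with ⟨he, _⟩ | ⟨he, _⟩
        · exact Or.inl ⟨h, he⟩
        · exact Or.inr (Or.inr ⟨Ne.symm h, he⟩)).elim (fun h' => absurd h' hab)
        (fun h' => h'.resolve_right hba)⟩
    haveI : IsStrictTotalOrder (Fin p) r :=
      { trichotomous := Std.Trichotomous.trichotomous }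
    haveI : DecidableRel r := Classical.decRel r
    letI lo : LinearOrder (Fin p) := linearOrderOfSTO r
    have hCt : Cᵀ = C := by
      have := hC.1
      rw [Matrix.IsHermitian, Matrix.conjTranspose_eq_transpose_of_trivial] at this
      exact this
    obtain ⟨M, hMt, hMe⟩ := exists_lowerTri_lyap hSpd C hCt
    refine ⟨hSpd, M, ?_, hMe⟩
    intro i j hij
    by_cases hij' : i = j
    · exact absurd (hij' ▸ hloops i) (hij' ▸ hij)
    · have hji : (j, i) ∈ E := by
        rcases hcomp i j hij' with ⟨h, _⟩ | ⟨h, _⟩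
        · exact absurd h hij
        · exact h
      exact hMt j i (show r j i from ⟨fun h => hij' h.symm, hji⟩)
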